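/- Let U be an ℓ×ℓ complex unitary matrix with spectral decomposition U = Σ_{r=1}^m λ_r F_r, and suppose every entry of U is algebraic over ℚ. Then every entry of the average mixing matrix M̂ = Σ_r F_r ∘ conj(F_r) is algebraic over ℚ. -/

import Mathlib

open Matrix Finset

/-- The average mixing matrix `M̂ = ∑ r, F_r ∘ conj(F_r)` of a quantum walk with
spectral idempotents `F_r`, where `∘` is the entrywise (Hadamard) product and
`conj` is entrywise complex conjugation. -/
noncomputable def avgMix {ℓ m : ℕ} (F : Fin m → Matrix (Fin ℓ) (Fin ℓ) ℂ) :
    Matrix (Fin ℓ) (Fin ℓ) ℂ :=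
  ∑ r, Matrix.hadamard (F r) ((F r).map (starRingEnd ℂ))

open Polynomial in
/-- Evaluating the characteristic polynomial of a matrix. -/
private lemma charpoly_eval' {n R : Type*} [Fintype n] [DecidableEq n] [CommRing R]
    (M : Matrix n n R) (μ : R) : M.charpoly.eval μ = (μ • (1 : Matrix n n R) - M).det := by
  rw [Matrix.charpoly, eval_det, matPolyEquiv_charmatrix]
  congr 1
  rw [eval_sub, eval_X, eval_C]
  congr 1
  ext i j
  by_cases h : i = j <;>
    simp [h, Matrix.scalar_apply, Matrix.one_apply, Matrix.smul_apply]

private lemma algC_add {x y : ℂ} (hx : IsAlgebraic ℚ x) (hy : IsAlgebraic ℚ y) :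
    IsAlgebraic ℚ (x + y) :=
  isAlgebraic_iff_isIntegral.2 (hx.isIntegral.add hy.isIntegral)

private lemma algC_mul {x y : ℂ} (hx : IsAlgebraic ℚ x) (hy : IsAlgebraic ℚ y) :
    IsAlgebraic ℚ (x * y) :=
  isAlgebraic_iff_isIntegral.2 (hx.isIntegral.mul hy.isIntegral)

private lemma algC_sub {x y : ℂ} (hx : IsAlgebraic ℚ x) (hy : IsAlgebraic ℚ y) :
    IsAlgebraic ℚ (x - y) :=
  isAlgebraic_iff_isIntegral.2 (hx.isIntegral.sub hy.isIntegral)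

private lemma algC_sum {ι : Type*} {s : Finset ι} {f : ι → ℂ}
    (h : ∀ i ∈ s, IsAlgebraic ℚ (f i)) : IsAlgebraic ℚ (∑ i ∈ s, f i) :=
  Finset.sum_induction f (IsAlgebraic ℚ) (fun _ _ ha hb => algC_add ha hb)
    isAlgebraic_zero h

private lemma algC_prod {ι : Type*} {s : Finset ι} {f : ι → ℂ}
    (h : ∀ i ∈ s, IsAlgebraic ℚ (f i)) : IsAlgebraic ℚ (∏ i ∈ s, f i) :=
  Finset.prod_induction f (IsAlgebraic ℚ) (fun _ _ ha hb => algC_mul ha hb)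
    isAlgebraic_one h

private lemma algC_conj {x : ℂ} (hx : IsAlgebraic ℚ x) :
    IsAlgebraic ℚ ((starRingEnd ℂ) x) :=
  hx.algHom ((Complex.conjAe.toAlgHom : ℂ →ₐ[ℝ] ℂ).restrictScalars ℚ)

open Polynomial in
/-- Coefficients of `∏ (X - C (a i))` are algebraic if the `a i` are. -/
private lemma algC_coeff_prod {ι : Type*} (s : Finset ι) (a : ι → ℂ)
    (h : ∀ i ∈ s, IsAlgebraic ℚ (a i)) :
    ∀ n, IsAlgebraic ℚ ((∏ i ∈ s, (X - C (a i))).coeff n) := by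
  classical
  induction s using Finset.induction_on with
  | empty =>
    intro n
    simp only [Finset.prod_empty, coeff_one]
    split <;> simp [isAlgebraic_zero, isAlgebraic_one]
  | @insert i s hi ih =>
    intro n
    rw [Finset.prod_insert hi, coeff_mul]
    refine algC_sum fun p _ => algC_mul ?_ (ih (fun j hj => h j (Finset.mem_insert_of_mem hj)) _)
    rw [coeff_sub]
    refine algC_sub ?_ ?_
    · rw [coeff_X]; split <;> simp [isAlgebraic_zero, isAlgebraic_one]
    · rw [coeff_C]; split
      · exact h i (Finset.mem_insert_self i s)
      · exact isAlgebraic_zero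

/-- If every entry of U is algebraic over ℚ, then every entry of M̂ is algebraic over ℚ. -/
theorem avgMix_algebraic (ℓ m : ℕ) (hℓ : 0 < ℓ)
    (U : Matrix (Fin ℓ) (Fin ℓ) ℂ)
    (hU : U ∈ Matrix.unitaryGroup (Fin ℓ) ℂ)
    (lam : Fin m → ℂ) (F : Fin m → Matrix (Fin ℓ) (Fin ℓ) ℂ)
    (hdist : Function.Injective lam)
    (hmod : ∀ r, ‖lam r‖ = 1)
    (hherm : ∀ r, (F r)ᴴ = F r)
    (hidem : ∀ r, F r * F r = F r)
    (horth : ∀ r s, r ≠ s → F r * F s = 0)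
    (hsum : ∑ r, F r = 1)
    (hspec : U = ∑ r, lam r • F r)
    (halg : ∀ i j, IsAlgebraic ℚ (U i j)) :
    ∀ i j, IsAlgebraic ℚ (avgMix F i j) := by
  classical
  open Polynomial in
  -- U acts on each F t as multiplication by lam t
  have hUF : ∀ t, U * F t = lam t • F t := by
    intro t
    rw [hspec, Finset.sum_mul]
    rw [Finset.sum_eq_single t]
    · rw [smul_mul_assoc, hidem]
    · intro u _ hu
      rw [smul_mul_assoc, horth u t hu, smul_zero]
    · simp
  -- powers of U act as powers of lam t
  have hUpowF : ∀ (n : ℕ) (t), U ^ n * F t = lam t ^ n • F t := by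
    intro n t
    induction n with
    | zero => simp
    | succ k ih =>
      rw [pow_succ, mul_assoc, hUF, mul_smul_comm, ih, smul_smul, pow_succ]
      ring_nf
  -- aeval of any polynomial at U acts on F t as eval at lam t
  have haev : ∀ (q : ℂ[X]) (t), (aeval U q) * F t = q.eval (lam t) • F t := by
    intro q t
    induction q using Polynomial.induction_on' with
    | add p q hp hq => rw [map_add, add_mul, hp, hq, eval_add, add_smul]
    | monomial n a =>
      rw [aeval_monomial, mul_assoc, hUpowF, eval_monomial, ← Algebra.smul_def, smul_smul]
  -- entries of powers of U are algebraic
  have hUpow_alg : ∀ (n : ℕ) (i j), IsAlgebraic ℚ ((U ^ n) i j) := by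
    intro n
    induction n with
    | zero =>
      intro i j
      simp only [pow_zero, Matrix.one_apply]
      split <;> simp [isAlgebraic_zero, isAlgebraic_one]
    | succ k ih =>
      intro i j
      rw [pow_succ, Matrix.mul_apply]
      exact algC_sum fun k _ => algC_mul (ih _ _) (halg _ _)
  -- eigenvalues corresponding to nonzero idempotents are algebraic
  have hlam_alg : ∀ r, F r ≠ 0 → IsAlgebraic ℚ (lam r) := by
    intro r hr
    -- the matrix lam r • 1 - U kills F r
    have hkill : (lam r • 1 - U) * F r = 0 := by
      rw [sub_mul, hUF, smul_mul_assoc, one_mul, sub_self]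
    -- find a nonzero column of F r
    obtain ⟨i, j, hij⟩ : ∃ i j, F r i j ≠ 0 := by
      by_contra h
      push_neg at h
      exact hr (by ext i j; simp [h i j])
    have hdet : (lam r • 1 - U).det = 0 := by
      rw [← Matrix.exists_mulVec_eq_zero_iff]
      refine ⟨fun k => F r k j, ?_, ?_⟩
      · intro h0
        exact hij (congrFun h0 i)
      · ext k
        have := congrFun (congrFun hkill k) j
        simpa [Matrix.mul_apply, Matrix.mulVec, dotProduct] using this
    -- lam r is a root of the characteristic polynomial of U
    have hroot : U.charpoly.eval (lam r) = 0 := by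
      rw [charpoly_eval']; exact hdet
    -- view U over the integral closure of ℚ in ℂ
    set A := integralClosure ℚ ℂ with hA
    let Ua : Matrix (Fin ℓ) (Fin ℓ) A := fun i j => ⟨U i j, (halg i j).isIntegral⟩
    have hmap : Ua.map (algebraMap A ℂ) = U := by
      ext i j; rfl
    have hint : IsIntegral A (lam r) := by
      refine ⟨Ua.charpoly, Ua.charpoly_monic, ?_⟩
      have : (Ua.charpoly.map (algebraMap A ℂ)).eval (lam r) = 0 := by
        rw [← Matrix.charpoly_map, hmap, hroot]
      rwa [eval_map] at this
    have : IsIntegral ℚ (lam r) := isIntegral_trans (A := A) (lam r) hint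
    exact isAlgebraic_iff_isIntegral.2 this
  -- entries of the idempotents are algebraic
  have hF_alg : ∀ r i j, IsAlgebraic ℚ (F r i j) := by
    intro r i j
    by_cases hr : F r = 0
    · rw [hr]; exact isAlgebraic_zero
    · set T : Finset (Fin m) := Finset.univ.filter (fun s => F s ≠ 0) with hT
      have hrT : r ∈ T := by simp [hT, hr]
      have hsumT : ∑ t ∈ T, F t = 1 := by
        rw [← hsum]
        apply Finset.sum_subset (Finset.subset_univ T)
        intro t _ ht
        simpa [hT] using ht
      set p : ℂ[X] := ∏ s ∈ T.erase r, (X - C (lam s)) with hp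
      set P : Matrix (Fin ℓ) (Fin ℓ) ℂ := aeval U p with hP
      set c : ℂ := ∏ s ∈ T.erase r, (lam r - lam s) with hc
      have hevalp : ∀ t, p.eval (lam t) = ∏ s ∈ T.erase r, (lam t - lam s) := by
        intro t; rw [hp, eval_prod]; simp
      have hcne : c ≠ 0 := by
        rw [hc]
        apply Finset.prod_ne_zero_iff.2
        intro s hs
        have : s ≠ r := (Finset.mem_erase.1 hs).1
        exact sub_ne_zero_of_ne fun h => this (hdist h).symm
      -- P = c • F r
      have hPF : P = c • F r := by
        calc P = P * 1 := (mul_one P).symm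
        _ = ∑ t ∈ T, P * F t := by rw [← hsumT, Finset.mul_sum]
        _ = ∑ t ∈ T, p.eval (lam t) • F t := by
            refine Finset.sum_congr rfl fun t _ => ?_
            rw [hP, haev]
        _ = c • F r := by
            rw [Finset.sum_eq_single r]
            · rw [hevalp, hc]
            · intro t htT htr
              have : p.eval (lam t) = 0 := by
                rw [hevalp]
                apply Finset.prod_eq_zero (Finset.mem_erase.2 ⟨htr, htT⟩)
                simp
              rw [this, zero_smul]
            · intro h; exact absurd hrT h
      have hFr : F r = c⁻¹ • P := by
        rw [hPF, smul_smul, inv_mul_cancel₀ hcne, one_smul]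
      -- algebraicity of c and of entries of P
      have hlamT : ∀ s ∈ T, IsAlgebraic ℚ (lam s) := by
        intro s hs
        exact hlam_alg s (by simpa [hT] using hs)
      have hc_alg : IsAlgebraic ℚ c := by
        rw [hc]
        exact algC_prod fun s hs =>
          algC_sub (hlamT r hrT) (hlamT s (Finset.mem_of_mem_erase hs))
      have hcoeff : ∀ n, IsAlgebraic ℚ (p.coeff n) :=
        algC_coeff_prod (T.erase r) lam
          (fun s hs => hlamT s (Finset.mem_of_mem_erase hs))
      have hP_alg : ∀ i j, IsAlgebraic ℚ (P i j) := by
        intro i j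
        rw [hP, Polynomial.aeval_eq_sum_range]
        rw [Matrix.sum_apply]
        refine algC_sum fun n _ => ?_
        rw [Matrix.smul_apply]
        exact algC_mul (hcoeff n) (hUpow_alg n i j)
      rw [hFr, Matrix.smul_apply, smul_eq_mul]
      exact algC_mul (IsAlgebraic.inv_iff.2 hc_alg) (hP_alg i j)
  -- conclude
  intro i j
  unfold avgMix
  rw [Matrix.sum_apply]
  refine algC_sum fun r _ => ?_
  rw [Matrix.hadamard_apply, Matrix.map_apply]
  exact algC_mul (hF_alg r i j) (algC_conj (hF_alg r i j))
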